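/- Let p be a prime, q a power of p, and k, t positive integers. Let q' = p^r for a non-negative integer r, set p_i = 1 + q' + q'^2 + … + q'^i for i ≥ 0, and let n = t·p_k. Let s be a positive integer coprime with n and σ : x ↦ x^{q^s} on F_{q^n}. Then the σ-linearized polynomial f(x) = x + Σ_{i=0}^{k−1} x^{σ^{t p_i}} is a σ-subspace polynomial of L_{n,σ}: its set of roots in F_{q^n} is an F_q-subspace of F_q-dimension t·p_{k−1}, equal to its σ-degree. -/

import Mathlib

open Polynomial Module Finset

set_option maxHeartbeats 1000000

/-- If `q^n - 1 ∣ q^m - 1` with `2 ≤ q`, `0 < n`, then `n ∣ m`. -/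
lemma aux_pow_sub_one_dvd {q n m : ℕ} (hq : 2 ≤ q) (hn : 0 < n)
    (h : q ^ n - 1 ∣ q ^ m - 1) : n ∣ m := by
  have h1 : ∀ a : ℕ, 1 ≤ q ^ a := fun a => Nat.one_le_pow _ _ (by omega)
  have hqn : q ^ n ≡ 1 [MOD q ^ n - 1] := ((Nat.modEq_iff_dvd' (h1 n)).mpr dvd_rfl).symm
  have hm : q ^ m ≡ 1 [MOD q ^ n - 1] := ((Nat.modEq_iff_dvd' (h1 m)).mpr h).symm
  have hsplit : q ^ m = (q ^ n) ^ (m / n) * q ^ (m % n) := by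
    rw [← pow_mul, ← pow_add]
    congr 1
    exact (Nat.div_add_mod m n).symm.trans (by ring_nf)
  have hv : q ^ (m % n) ≡ 1 [MOD q ^ n - 1] := by
    have h2 : (q ^ n) ^ (m / n) * q ^ (m % n) ≡ 1 ^ (m / n) * q ^ (m % n) [MOD q ^ n - 1] :=
      (hqn.pow _).mul_right _
    rw [one_pow, one_mul] at h2
    calc q ^ (m % n) ≡ q ^ m [MOD q ^ n - 1] := (hsplit ▸ h2).symm
      _ ≡ 1 [MOD q ^ n - 1] := hm
  have hdvd : q ^ n - 1 ∣ q ^ (m % n) - 1 := (Nat.modEq_iff_dvd' (h1 _)).mp hv.symm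
  rcases Nat.eq_zero_or_pos (m % n) with h0 | hpos
  · exact Nat.dvd_of_mod_eq_zero h0
  · exfalso
    have hlt : q ^ (m % n) < q ^ n := Nat.pow_lt_pow_right (by omega) (Nat.mod_lt _ hn)
    have hge : q ^ (m % n) ≥ q := by
      calc q = q ^ 1 := (pow_one q).symm
        _ ≤ q ^ (m % n) := Nat.pow_le_pow_right (by omega) hpos
    have := Nat.le_of_dvd (by omega) hdvd
    omega

/-- Cancellation: if `q^(s*i) ≡ q^(s*j)` mod `q^n - 1`, and `i ≤ j < n`, `gcd s n = 1`,
then `i = j`. -/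
lemma aux_pow_inj {q n s i j : ℕ} (hq : 2 ≤ q) (hn : 0 < n) (hsn : Nat.gcd s n = 1)
    (hij : i ≤ j) (hjn : j < n)
    (hmod : q ^ (s * i) ≡ q ^ (s * j) [MOD q ^ n - 1]) : i = j := by
  have h1 : ∀ a : ℕ, 1 ≤ q ^ a := fun a => Nat.one_le_pow _ _ (by omega)
  have hcoq : Nat.Coprime (q ^ n - 1) q := by
    have hg1 : Nat.gcd (q ^ n - 1) q ∣ q ^ n := (Nat.gcd_dvd_right _ _).trans (dvd_pow_self q hn.ne')
    have hg2 : Nat.gcd (q ^ n - 1) q ∣ q ^ n - 1 := Nat.gcd_dvd_left _ _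
    have : Nat.gcd (q ^ n - 1) q ∣ 1 := by
      have := Nat.dvd_sub hg1 hg2
      rwa [show q ^ n - (q ^ n - 1) = 1 by have := h1 n; omega] at this
    exact Nat.dvd_one.mp this
  have hco : Nat.gcd (q ^ n - 1) (q ^ (s * i)) = 1 := hcoq.pow_right _
  have hjsplit : q ^ (s * j) = q ^ (s * i) * q ^ (s * (j - i)) := by
    rw [← pow_add]
    congr 1
    rw [← Nat.mul_add]
    congr 1
    omega
  rw [hjsplit, ← mul_one (q ^ (s * i))] at hmod
  rw [mul_one] at hmod
  have hmod2 : q ^ (s * i) * 1 ≡ q ^ (s * i) * q ^ (s * (j - i)) [MOD q ^ n - 1] := by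
    rwa [mul_one]
  have hone : (1 : ℕ) ≡ q ^ (s * (j - i)) [MOD q ^ n - 1] :=
    Nat.ModEq.cancel_left_of_coprime hco hmod2
  have hdvd : q ^ n - 1 ∣ q ^ (s * (j - i)) - 1 := (Nat.modEq_iff_dvd' (h1 _)).mp hone
  have hndvd : n ∣ s * (j - i) := aux_pow_sub_one_dvd hq hn hdvd
  have hcop : Nat.Coprime n s := Nat.coprime_comm.mp hsn
  have : n ∣ j - i := hcop.dvd_of_dvd_mul_left hndvd
  have := Nat.eq_zero_of_dvd_of_lt this
  omega


/-- Subadditivity of kernel dimension under composition. -/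
lemma aux_finrank_ker_comp {R V : Type} [Field R] [AddCommGroup V] [Module R V]
    [FiniteDimensional R V] (φ ψ : V →ₗ[R] V) :
    Module.finrank R (LinearMap.ker (φ ∘ₗ ψ)) ≤
      Module.finrank R (LinearMap.ker φ) + Module.finrank R (LinearMap.ker ψ) := by
  set W := LinearMap.ker (φ ∘ₗ ψ) with hW
  let ψW : ↥W →ₗ[R] V := ψ.comp W.subtype
  have h1 : Module.finrank R (LinearMap.range ψW) + Module.finrank R (LinearMap.ker ψW)
      = Module.finrank R ↥W := LinearMap.finrank_range_add_finrank_ker ψW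
  have h2 : LinearMap.range ψW ≤ LinearMap.ker φ := by
    rintro x ⟨w, rfl⟩
    exact w.2
  have h3 : Module.finrank R (LinearMap.range ψW) ≤ Module.finrank R (LinearMap.ker φ) :=
    Submodule.finrank_mono h2
  have h4 : Module.finrank R (LinearMap.ker ψW) ≤ Module.finrank R (LinearMap.ker ψ) := by
    have hk : LinearMap.ker ψW = Submodule.comap W.subtype (LinearMap.ker ψ) :=
      LinearMap.ker_comp _ _
    rw [hk]
    have e := Submodule.equivMapOfInjective W.subtype (Submodule.injective_subtype W)
      (Submodule.comap W.subtype (LinearMap.ker ψ))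
    rw [e.finrank_eq, Submodule.map_comap_subtype]
    exact Submodule.finrank_mono inf_le_right
  omega

/-- Key lemma: the kernel of a `σ`-linearized polynomial `P(σ)` has dimension at most
`deg P`, when the powers `σ^0, …, σ^(n-1)` are pairwise distinct multiplicative maps. -/
lemma aux_key {Fq K : Type} [Field Fq] [Field K] [Algebra Fq K] [FiniteDimensional Fq K]
    {n : ℕ} (hn : Module.finrank Fq K = n)
    (σL : Module.End Fq K)
    (hone : ∀ l : ℕ, (σL ^ l) (1 : K) = 1)
    (hmul : ∀ (l : ℕ) (x y : K), (σL ^ l) (x * y) = (σL ^ l) x * (σL ^ l) y)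
    (hinj : ∀ i j : Fin n, (⇑(σL ^ (i : ℕ)) : K → K) = ⇑(σL ^ (j : ℕ)) → i = j)
    (P : Polynomial Fq) (hP : P ≠ 0) :
    Module.finrank Fq (LinearMap.ker (Polynomial.aeval σL P)) ≤ P.natDegree := by
  classical
  by_cases hdn : n ≤ P.natDegree
  · calc Module.finrank Fq (LinearMap.ker (Polynomial.aeval σL P))
        ≤ Module.finrank Fq K := Submodule.finrank_le _
      _ = n := hn
      _ ≤ P.natDegree := hdn
  push_neg at hdn
  set d := P.natDegree with hd
  set U := LinearMap.ker (Polynomial.aeval σL P) with hU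
  -- Dedekind-style: monoid homs σ^l, l < n, are K-linearly independent.
  let ψ : Fin n → (K →* K) := fun l =>
    { toFun := ⇑(σL ^ (l : ℕ)), map_one' := hone l, map_mul' := hmul l }
  have hψinj : Function.Injective ψ := by
    intro i j hij
    exact hinj i j (funext fun x => DFunLike.congr_fun hij x)
  have hli : LinearIndependent K (fun l : Fin n => ((ψ l : K →* K) : K → K)) :=
    (linearIndependent_monoidHom K K).comp ψ hψinj
  have hded : ∀ D : Polynomial K, D.natDegree < n →
      (∀ x : K, ∑ l ∈ range n, D.coeff l * (σL ^ l) x = 0) → D = 0 := by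
    intro D hdeg hD0
    have hsum : ∑ l : Fin n, D.coeff (l : ℕ) • ((ψ l : K →* K) : K → K) = 0 := by
      funext x
      have : (∑ l : Fin n, D.coeff (l : ℕ) • ((ψ l : K →* K) : K → K)) x
          = ∑ l : Fin n, D.coeff (l : ℕ) * (σL ^ (l : ℕ)) x := by
        rw [Finset.sum_apply]
        simp [ψ, smul_eq_mul]
      rw [this]
      have := hD0 x
      rwa [Finset.sum_range (fun l => D.coeff l * (σL ^ l) x)] at this
    have hz := Fintype.linearIndependent_iff.mp hli (fun l => D.coeff (l : ℕ)) hsum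
    ext l
    rcases lt_or_ge l n with hl | hl
    · simpa using hz ⟨l, hl⟩
    · simp [Polynomial.coeff_eq_zero_of_natDegree_lt (lt_of_lt_of_le hdeg hl)]
  -- The "annihilator of U" submodule over K.
  let res : (Module.End Fq K) →ₗ[K] (↥U →ₗ[Fq] K) :=
    { toFun := fun φ => φ.comp U.subtype
      map_add' := fun φ₁ φ₂ => LinearMap.add_comp _ _ _
      map_smul' := fun c φ => LinearMap.smul_comp _ _ _ }
  have hres_surj : Function.Surjective res := by
    intro ϑ
    obtain ⟨g, hg⟩ := LinearMap.exists_extend ϑ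
    exact ⟨g, hg⟩
  -- dimensions over K
  set m := Module.finrank Fq ↥U with hm
  let bK : Basis (Fin n) Fq K := Module.finBasisOfFinrankEq Fq K hn
  let eE : (Fin n → K) ≃ₗ[K] (K →ₗ[Fq] K) := bK.constr K
  haveI : Module.Finite K (K →ₗ[Fq] K) := Module.Finite.equiv eE
  have hEn : Module.finrank K (K →ₗ[Fq] K) = n := by
    rw [← eE.finrank_eq, Module.finrank_fin_fun]
  haveI : FiniteDimensional Fq ↥U := inferInstance
  let bU : Basis (Fin m) Fq ↥U := Module.finBasisOfFinrankEq Fq ↥U rfl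
  let eU : (Fin m → K) ≃ₗ[K] (↥U →ₗ[Fq] K) := bU.constr K
  haveI : Module.Finite K (↥U →ₗ[Fq] K) := Module.Finite.equiv eU
  have hUm : Module.finrank K (↥U →ₗ[Fq] K) = m := by
    rw [← eU.finrank_eq, Module.finrank_fin_fun]
  have hrn : Module.finrank K (LinearMap.range res) + Module.finrank K (LinearMap.ker res)
      = Module.finrank K (K →ₗ[Fq] K) := LinearMap.finrank_range_add_finrank_ker res
  have hrange : LinearMap.range res = ⊤ := LinearMap.range_eq_top.mpr hres_surj
  have hkerres : m + Module.finrank K (LinearMap.ker res) = n := by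
    rw [hrange] at hrn
    rw [finrank_top K _] at hrn
    rw [hUm, hEn] at hrn
    exact hrn
  -- the independent family σ^j ∘ P(σ) in the annihilator
  let hfam : Fin (n - d) → Module.End Fq K :=
    fun j => (σL ^ (j : ℕ)) * (Polynomial.aeval σL P)
  have hmem : ∀ j, hfam j ∈ LinearMap.ker res := by
    intro j
    rw [LinearMap.mem_ker]
    apply LinearMap.ext
    intro u
    have hu : (Polynomial.aeval σL P) (u : K) = 0 := u.2
    simp [res, hfam, Module.End.mul_apply, hu]
  -- linear independence of the family over K
  have hPkne : (P.map (algebraMap Fq K)) ≠ 0 := Polynomial.map_ne_zero hP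
  have hindep : LinearIndependent K hfam := by
    rw [Fintype.linearIndependent_iff]
    intro c hc
    set Pk : Polynomial K := P.map (algebraMap Fq K) with hPkdef
    have haA : ∀ x : K, (Polynomial.aeval σL P) x = ∑ i ∈ range n, P.coeff i • (σL ^ i) x := by
      intro x
      have h1 : Polynomial.aeval σL P = ∑ i ∈ range n, P.coeff i • σL ^ i :=
        Polynomial.aeval_eq_sum_range' hdn σL
      rw [h1, LinearMap.sum_apply]
      simp [LinearMap.smul_apply]
    have hshift : ∀ j : ℕ, j < n - d → ∀ x : K,
        (σL ^ j) ((Polynomial.aeval σL P) x)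
          = ∑ l ∈ range n, (Pk * X ^ j).coeff l * (σL ^ l) x := by
      intro j hj x
      have hL : ∀ i ∈ range n, (σL ^ j) (P.coeff i • (σL ^ i) x)
          = P.coeff i • (σL ^ (j + i)) x := by
        intro i _
        rw [map_smul, pow_add, Module.End.mul_apply]
      have hR : ∑ l ∈ range n, (Pk * X ^ j).coeff l * (σL ^ l) x
          = ∑ i ∈ range n, P.coeff i • (σL ^ (j + i)) x := by
        rw [← Finset.sum_range_add_sum_Ico _ (show j ≤ n by omega)]
        have hz : ∑ l ∈ range j, (Pk * X ^ j).coeff l * (σL ^ l) x = 0 := by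
          apply Finset.sum_eq_zero
          intro l hl
          rw [Polynomial.coeff_mul_X_pow']
          simp [Nat.not_le.mpr (Finset.mem_range.mp hl)]
        rw [hz, zero_add, Finset.sum_Ico_eq_sum_range]
        have hterm : ∀ i ∈ range (n - j), (Pk * X ^ j).coeff (j + i) * (σL ^ (j + i)) x
            = P.coeff i • (σL ^ (j + i)) x := by
          intro i _
          rw [Polynomial.coeff_mul_X_pow', if_pos (Nat.le_add_right j i)]
          have h3 : j + i - j = i := by omega
          rw [h3, hPkdef, Polynomial.coeff_map, ← Algebra.smul_def]
        rw [Finset.sum_congr rfl hterm]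
        apply Finset.sum_subset (Finset.range_subset_range.mpr (by omega : n - j ≤ n))
        intro i hi hni
        have h1 : n - j ≤ i := by
          by_contra hcon
          exact hni (Finset.mem_range.mpr (by omega))
        have h2 : d < i := by omega
        rw [Polynomial.coeff_eq_zero_of_natDegree_lt h2, zero_smul]
      rw [haA, map_sum, Finset.sum_congr rfl hL, hR]
    set DD : Polynomial K := ∑ j : Fin (n - d), Polynomial.C (c j) * (Pk * X ^ (j : ℕ))
      with hDDdef
    have hDDcoeff : ∀ l : ℕ, DD.coeff l = ∑ j : Fin (n - d), c j * (Pk * X ^ (j : ℕ)).coeff l := by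
      intro l
      rw [hDDdef, Polynomial.finset_sum_coeff]
      apply Finset.sum_congr rfl
      intro j _
      rw [Polynomial.coeff_C_mul]
    have hDD0 : ∀ x : K, ∑ l ∈ range n, DD.coeff l * (σL ^ l) x = 0 := by
      intro x
      have hx := congrFun (congrArg (fun (φ : Module.End Fq K) => ⇑φ) hc) x
      simp only [LinearMap.coe_sum, Finset.sum_apply, LinearMap.smul_apply,
        LinearMap.zero_apply, Pi.zero_apply, smul_eq_mul] at hx
      have hx2 : ∑ j : Fin (n - d), c j *
          (∑ l ∈ range n, (Pk * X ^ (j : ℕ)).coeff l * (σL ^ l) x) = 0 := by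
        rw [← hx]
        apply Finset.sum_congr rfl
        intro j _
        congr 1
        have := hshift (j : ℕ) j.isLt x
        rw [← this]
        simp [hfam, Module.End.mul_apply]
      calc ∑ l ∈ range n, DD.coeff l * (σL ^ l) x
          = ∑ l ∈ range n, ∑ j : Fin (n - d),
              c j * ((Pk * X ^ (j : ℕ)).coeff l * (σL ^ l) x) := by
            apply Finset.sum_congr rfl
            intro l _
            rw [hDDcoeff, Finset.sum_mul]
            apply Finset.sum_congr rfl
            intro j _
            ring
        _ = ∑ j : Fin (n - d), ∑ l ∈ range n,
              c j * ((Pk * X ^ (j : ℕ)).coeff l * (σL ^ l) x) := by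
              exact Finset.sum_comm
        _ = ∑ j : Fin (n - d), c j *
              (∑ l ∈ range n, (Pk * X ^ (j : ℕ)).coeff l * (σL ^ l) x) := by
            apply Finset.sum_congr rfl
            intro j _
            rw [Finset.mul_sum]
        _ = 0 := hx2
    have hDDdeg : DD.natDegree < n := by
      have : DD.natDegree ≤ n - 1 := by
        apply Polynomial.natDegree_sum_le_of_forall_le
        intro j _
        calc (Polynomial.C (c j) * (Pk * X ^ (j : ℕ))).natDegree
            ≤ (Pk * X ^ (j : ℕ)).natDegree := Polynomial.natDegree_C_mul_le _ _
          _ ≤ Pk.natDegree + (X ^ (j : ℕ) : Polynomial K).natDegree :=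
              Polynomial.natDegree_mul_le
          _ ≤ d + (j : ℕ) := by
              rw [Polynomial.natDegree_X_pow]
              have h9 : Pk.natDegree ≤ P.natDegree := by
                rw [hPkdef]
                exact Polynomial.natDegree_map_le
              have hdP : d = P.natDegree := hd
              omega
          _ ≤ n - 1 := by have := j.isLt; omega
      omega
    have hDDz : DD = 0 := hded DD hDDdeg hDD0
    have hfactor : DD = (∑ j : Fin (n - d), Polynomial.C (c j) * X ^ (j : ℕ)) * Pk := by
      rw [hDDdef, Finset.sum_mul]
      apply Finset.sum_congr rfl
      intro j _
      ring
    have hCp : (∑ j : Fin (n - d), Polynomial.C (c j) * X ^ (j : ℕ)) = 0 := by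
      rcases mul_eq_zero.mp (hfactor ▸ hDDz) with h | h
      · exact h
      · exact absurd h hPkne
    intro j
    have hcj : (∑ j' : Fin (n - d), Polynomial.C (c j') * X ^ (j' : ℕ)).coeff (j : ℕ) = c j := by
      rw [Polynomial.finset_sum_coeff, Finset.sum_eq_single j]
      · rw [Polynomial.coeff_C_mul, Polynomial.coeff_X_pow, if_pos rfl, mul_one]
      · intro b _ hb
        have h1 : ¬ (j = b) := fun h => hb h.symm
        simp [Polynomial.coeff_X_pow, Fin.val_eq_val, hb, h1]
      · intro h
        exact absurd (Finset.mem_univ j) h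
    rw [hCp] at hcj
    simpa using hcj.symm
  -- conclude by dimension count
  let hfam' : Fin (n - d) → ↥(LinearMap.ker res) := fun j => ⟨hfam j, hmem j⟩
  have hindep' : LinearIndependent K hfam' :=
    LinearIndependent.of_comp (LinearMap.ker res).subtype hindep
  have hcard := hindep'.fintype_card_le_finrank
  rw [Fintype.card_fin] at hcard
  have hmn : m ≤ n := hn ▸ Submodule.finrank_le U
  omega


lemma aux_step {Fq : Type} [Field Fq] {A : Polynomial Fq} {a b : ℕ}
    (hA : A.Monic) (hdeg : A.natDegree = a) (hab : a < b) :
    (A + Polynomial.X ^ b).Monic ∧ (A + Polynomial.X ^ b).natDegree = b := by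
  have hAne : A ≠ 0 := hA.ne_zero
  have hdlt : A.degree < (Polynomial.X ^ b : Polynomial Fq).degree := by
    rw [Polynomial.degree_X_pow, Polynomial.degree_eq_natDegree hAne, hdeg]
    exact_mod_cast hab
  refine ⟨Polynomial.Monic.add_of_right (Polynomial.monic_X_pow b) hdlt, ?_⟩
  have h2 := Polynomial.degree_add_eq_right_of_degree_lt hdlt
  rw [Polynomial.degree_X_pow] at h2
  exact Polynomial.natDegree_eq_of_degree_eq_some h2

lemma aux_monic {Fq : Type} [Field Fq] (qp t : ℕ) (ht : 0 < t) (hqp : 0 < qp) :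
    ∀ m : ℕ, (1 + ∑ i ∈ Finset.range (m + 1),
        (Polynomial.X : Polynomial Fq) ^ (t * ∑ j ∈ Finset.range (i + 1), qp ^ j)).Monic ∧
      (1 + ∑ i ∈ Finset.range (m + 1),
        (Polynomial.X : Polynomial Fq) ^ (t * ∑ j ∈ Finset.range (i + 1), qp ^ j)).natDegree
        = t * ∑ j ∈ Finset.range (m + 1), qp ^ j := by
  have hpe_pos : ∀ i : ℕ, 0 < ∑ j ∈ Finset.range (i + 1), qp ^ j := by
    intro i
    apply Finset.sum_pos
    · intro j _
      exact Nat.pow_pos hqp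
    · exact ⟨0, Finset.mem_range.mpr (by omega)⟩
  have hpe_lt : ∀ i : ℕ, (∑ j ∈ Finset.range (i + 1), qp ^ j) <
      ∑ j ∈ Finset.range (i + 2), qp ^ j := by
    intro i
    rw [Finset.sum_range_succ (f := fun j => qp ^ j) (n := i + 1)]
    have : 0 < qp ^ (i + 1) := Nat.pow_pos hqp
    omega
  intro m
  induction m with
  | zero =>
      rw [Finset.sum_range_one]
      exact aux_step monic_one natDegree_one (by
        have := hpe_pos 0
        positivity)
  | succ m ih =>
      rw [Finset.sum_range_succ (f := fun i =>
        (Polynomial.X : Polynomial Fq) ^ (t * ∑ j ∈ Finset.range (i + 1), qp ^ j)), ← add_assoc]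
      apply aux_step ih.1 ih.2
      have h1 := hpe_lt m
      have h2 := hpe_pos m
      nlinarith

lemma aux_ident {Fq : Type} [Field Fq] (p : ℕ) [Fact p.Prime] [CharP Fq p] {r t k qp : ℕ}
    (hqp : qp = p ^ r) :
    (1 + ∑ i ∈ Finset.range k,
        (Polynomial.X : Polynomial Fq) ^ (t * ∑ j ∈ Finset.range (i + 1), qp ^ j)) *
      (Polynomial.X ^ t * (1 + ∑ i ∈ Finset.range k,
        (Polynomial.X : Polynomial Fq) ^ (t * ∑ j ∈ Finset.range (i + 1), qp ^ j)) ^ (qp - 1) - 1)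
    = Polynomial.X ^ (t * ∑ j ∈ Finset.range (k + 1), qp ^ j) - 1 := by
  have hp : p.Prime := Fact.out
  haveI : ExpChar (Polynomial Fq) p := ExpChar.prime hp
  subst hqp
  set qp : ℕ := p ^ r with hqp
  have hqp1 : 1 ≤ qp := Nat.one_le_pow _ _ hp.pos
  set S : Polynomial Fq := ∑ i ∈ Finset.range k,
    (Polynomial.X : Polynomial Fq) ^ (t * ∑ j ∈ Finset.range (i + 1), qp ^ j) with hS
  set P : Polynomial Fq := 1 + S with hP
  have hpesucc : ∀ i : ℕ, (∑ j ∈ Finset.range (i + 2), qp ^ j)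
      = (∑ j ∈ Finset.range (i + 1), qp ^ j) * qp + 1 := by
    intro i
    rw [Finset.sum_range_succ' (f := fun j => qp ^ j) (n := i + 1)]
    simp only [pow_zero, pow_succ]
    rw [← Finset.sum_mul]
  have hkey : Polynomial.X ^ t * P ^ qp
      = P + (Polynomial.X ^ (t * ∑ j ∈ Finset.range (k + 1), qp ^ j) - 1) := by
    have hPpow : P ^ qp = 1 + ∑ i ∈ Finset.range k,
        (Polynomial.X : Polynomial Fq) ^ ((t * ∑ j ∈ Finset.range (i + 1), qp ^ j) * qp) := by
      rw [hP, hqp, add_pow_char_pow, one_pow, hS, hqp, sum_pow_char_pow]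
      congr 1
      apply Finset.sum_congr rfl
      intro i _
      rw [← pow_mul]
    rw [hPpow, mul_add, mul_one, Finset.mul_sum]
    have hterm : ∀ i ∈ Finset.range k,
        (Polynomial.X : Polynomial Fq) ^ t *
          Polynomial.X ^ ((t * ∑ j ∈ Finset.range (i + 1), qp ^ j) * qp)
        = Polynomial.X ^ (t * ∑ j ∈ Finset.range (i + 2), qp ^ j) := by
      intro i _
      rw [← pow_add]
      congr 1
      rw [hpesucc i]
      ring
    rw [Finset.sum_congr rfl hterm]
    -- RHS: P + (X^{t·pe k} − 1) = ∑_{i ∈ range (k+1)} X^{t·pe i}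
    rw [hP, hS]
    have hrhs : (1 + ∑ i ∈ Finset.range k,
          (Polynomial.X : Polynomial Fq) ^ (t * ∑ j ∈ Finset.range (i + 1), qp ^ j))
        + (Polynomial.X ^ (t * ∑ j ∈ Finset.range (k + 1), qp ^ j) - 1)
        = ∑ i ∈ Finset.range (k + 1),
          (Polynomial.X : Polynomial Fq) ^ (t * ∑ j ∈ Finset.range (i + 1), qp ^ j) := by
      rw [Finset.sum_range_succ (f := fun i =>
        (Polynomial.X : Polynomial Fq) ^ (t * ∑ j ∈ Finset.range (i + 1), qp ^ j))]
      ring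
    rw [hrhs]
    rw [Finset.sum_range_succ' (f := fun i =>
      (Polynomial.X : Polynomial Fq) ^ (t * ∑ j ∈ Finset.range (i + 1), qp ^ j)) k]
    have h0 : (t * ∑ j ∈ Finset.range (0 + 1), qp ^ j) = t := by simp
    rw [h0, add_comm]
  have hq : qp - 1 + 1 = qp := by omega
  calc P * (Polynomial.X ^ t * P ^ (qp - 1) - 1)
      = Polynomial.X ^ t * (P ^ (qp - 1) * P) - P := by ring
    _ = Polynomial.X ^ t * P ^ qp - P := by rw [← pow_succ, hq]
    _ = (P + (Polynomial.X ^ (t * ∑ j ∈ Finset.range (k + 1), qp ^ j) - 1)) - P := by rw [hkey]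
    _ = Polynomial.X ^ (t * ∑ j ∈ Finset.range (k + 1), qp ^ j) - 1 := by ring

/-- `F_q`-dimension of the kernel (set of roots in `K`) of a map `f : K → K`. -/
noncomputable def kdim (Fq : Type) [Field Fq] {K : Type} [Field K] [Algebra Fq K]
    (f : K → K) : ℕ :=
  Module.finrank Fq ↥(Submodule.span Fq {x : K | f x = 0})

/-- with `q' = p^r`, `p_i = 1 + q' + ⋯ + q'^i`, `n = t·p_k`, `gcd(s,n)=1`
and `σ : x ↦ x^{q^s}`, the σ-polynomial `f(x) = x + Σ_{i=0}^{k−1} x^{σ^{t·p_i}}` is a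
σ-subspace polynomial of `L_{n,σ}`: its roots in `F_{q^n}` form an `F_q`-subspace of
dimension `t·p_{k−1}`, equal to its σ-degree. -/
theorem stmt_7 (p q qp r s t k n : ℕ) (Fq K : Type) [Field Fq] [Fintype Fq] [Field K]
    [Fintype K] [Algebra Fq K]
    (hp : p.Prime) (hpe : ∃ e : ℕ, 0 < e ∧ q = p ^ e) (hqp : qp = p ^ r)
    (ht : 0 < t) (hk : 0 < k)
    (hn : n = t * ∑ j ∈ Finset.range (k + 1), qp ^ j)
    (hs : 0 < s) (hsn : Nat.gcd s n = 1)
    (hcard : Fintype.card Fq = q) (hfin : Module.finrank Fq K = n) :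
    kdim Fq (fun x : K =>
        x + ∑ i ∈ Finset.range k, x ^ ((q ^ s) ^ (t * ∑ j ∈ Finset.range (i + 1), qp ^ j)))
      = t * ∑ j ∈ Finset.range k, qp ^ j := by
    classical
  obtain ⟨e, he, hqe⟩ := hpe
  haveI hfact : Fact p.Prime := ⟨hp⟩
  haveI hcharFq : CharP Fq p := by
    have h1 : CharP Fq (ringChar Fq) := ringChar.charP Fq
    obtain ⟨f, hfp, hcardf⟩ := FiniteField.card Fq (ringChar Fq)
    have hpd : p ∣ ringChar Fq := by
      have h2 : p ∣ Fintype.card Fq := by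
        rw [hcard, hqe]
        exact dvd_pow_self p he.ne'
      rw [hcardf] at h2
      exact hp.dvd_of_dvd_pow h2
    have h3 : p = ringChar Fq := (Nat.prime_dvd_prime_iff_eq hp hfp).mp hpd
    rw [h3]
    exact h1
  haveI hcharK : CharP K p := charP_of_injective_algebraMap (algebraMap Fq K).injective p
  haveI : ExpChar K p := ExpChar.prime hp
  have hq2 : 2 ≤ q := by
    rw [hqe]
    calc 2 ≤ p := hp.two_le
      _ ≤ p ^ e := Nat.le_self_pow he.ne' p
  have hqppos : 0 < qp := by
    rw [hqp]
    exact Nat.pow_pos hp.pos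
  have hpe_pos : ∀ m : ℕ, 0 < ∑ j ∈ Finset.range (m + 1), qp ^ j := by
    intro m
    apply Finset.sum_pos
    · intro j _
      exact Nat.pow_pos hqppos
    · exact ⟨0, Finset.mem_range.mpr (by omega)⟩
  have hnpos : 0 < n := by
    rw [hn]
    exact Nat.mul_pos ht (hpe_pos k)
  -- the Frobenius power σ as an Fq-linear endomorphism
  set Q : ℕ := q ^ s with hQdef
  have hQchar : Q = p ^ (e * s) := by rw [hQdef, hqe, ← pow_mul]
  have hfix : ∀ c : Fq, c ^ Q = c := by
    intro c
    rw [hQdef, ← hcard]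
    exact FiniteField.pow_card_pow s c
  let σL : Module.End Fq K :=
    { toFun := fun x => x ^ Q
      map_add' := by
        intro x y
        rw [hQchar]
        exact add_pow_char_pow x y p (e * s)
      map_smul' := by
        intro c x
        simp only [RingHom.id_apply]
        rw [Algebra.smul_def, Algebra.smul_def, mul_pow, ← map_pow, hfix] }
  have hσapp : ∀ x : K, σL x = x ^ Q := fun _ => rfl
  have hσpow : ∀ (l : ℕ) (x : K), (σL ^ l) x = x ^ Q ^ l := by
    intro l
    induction l with
    | zero => intro x; simp
    | succ l ih =>
        intro x
        calc (σL ^ (l + 1)) x = (σL ^ l) (σL x) := by rw [pow_succ, Module.End.mul_apply]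
          _ = (x ^ Q) ^ Q ^ l := ih (σL x)
          _ = x ^ Q ^ (l + 1) := by rw [← pow_mul, ← pow_succ']
  have hcardK : Fintype.card K = q ^ n := by
    rw [card_eq_pow_finrank (K := Fq) (V := K), hcard, hfin]
  have hσn : σL ^ n = 1 := by
    apply LinearMap.ext
    intro x
    rw [hσpow, Module.End.one_apply]
    have h4 : Q ^ n = (q ^ n) ^ s := by rw [hQdef, ← pow_mul, ← pow_mul, Nat.mul_comm]
    rw [h4, ← hcardK]
    exact FiniteField.pow_card_pow s x
  have hone : ∀ l : ℕ, (σL ^ l) (1 : K) = 1 := by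
    intro l
    rw [hσpow]
    exact one_pow _
  have hmul : ∀ (l : ℕ) (x y : K), (σL ^ l) (x * y) = (σL ^ l) x * (σL ^ l) y := by
    intro l x y
    rw [hσpow, hσpow, hσpow]
    exact mul_pow x y _
  have hinj : ∀ i j : Fin n, (⇑(σL ^ (i : ℕ)) : K → K) = ⇑(σL ^ (j : ℕ)) → i = j := by
    intro i j hij
    obtain ⟨g, hg⟩ := IsCyclic.exists_generator (α := Kˣ)
    have hord : orderOf g = q ^ n - 1 := by
      rw [orderOf_eq_card_of_forall_mem_zpowers hg, Nat.card_eq_fintype_card,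
        Fintype.card_units, hcardK]
    have hgeq : ((g : K)) ^ Q ^ (i : ℕ) = ((g : K)) ^ Q ^ (j : ℕ) := by
      have h5 := congrFun hij (g : K)
      rwa [hσpow, hσpow] at h5
    have hueq : g ^ Q ^ (i : ℕ) = g ^ Q ^ (j : ℕ) := Units.ext (by
      rw [Units.val_pow_eq_pow_val, Units.val_pow_eq_pow_val]
      exact hgeq)
    have hmod : Q ^ (i : ℕ) ≡ Q ^ (j : ℕ) [MOD q ^ n - 1] := by
      have h6 := pow_eq_pow_iff_modEq.mp hueq
      rwa [hord] at h6
    have hmod' : q ^ (s * (i : ℕ)) ≡ q ^ (s * (j : ℕ)) [MOD q ^ n - 1] := by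
      rwa [hQdef, ← pow_mul, ← pow_mul] at hmod
    rcases le_total (i : ℕ) (j : ℕ) with hle | hle
    · exact Fin.ext (aux_pow_inj hq2 hnpos hsn hle j.isLt hmod')
    · exact (Fin.ext (aux_pow_inj hq2 hnpos hsn hle i.isLt hmod'.symm)).symm
  -- the polynomial and its cofactor
  set P : Polynomial Fq := 1 + ∑ i ∈ Finset.range k,
    (Polynomial.X : Polynomial Fq) ^ (t * ∑ j ∈ Finset.range (i + 1), qp ^ j) with hPdef
  have hPm : P.Monic ∧ P.natDegree = t * ∑ j ∈ Finset.range k, qp ^ j := by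
    have h7 := aux_monic (Fq := Fq) qp t ht hqppos (k - 1)
    have hk1 : k - 1 + 1 = k := by omega
    rw [hk1] at h7
    exact h7
  set R' : Polynomial Fq := Polynomial.X ^ t * P ^ (qp - 1) - 1 with hR'def
  have hId' : P * R' = Polynomial.X ^ n - 1 := by
    have h8 := aux_ident (Fq := Fq) p (r := r) (t := t) (k := k) hqp
    rw [hPdef, hR'def, h8, ← hn]
  have hXn : (Polynomial.X ^ n - 1 : Polynomial Fq) ≠ 0 := by
    intro h
    have h1 : (Polynomial.X ^ n - 1 : Polynomial Fq).natDegree = n := by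
      rw [← Polynomial.C_1, Polynomial.natDegree_X_pow_sub_C]
    rw [h] at h1
    simp only [Polynomial.natDegree_zero] at h1
    omega
  have hPne : P ≠ 0 := hPm.1.ne_zero
  have hR'ne : R' ≠ 0 := by
    intro h
    rw [h, mul_zero] at hId'
    exact hXn hId'.symm
  have hdegsum : P.natDegree + R'.natDegree = n := by
    rw [← Polynomial.natDegree_mul hPne hR'ne, hId', ← Polynomial.C_1,
      Polynomial.natDegree_X_pow_sub_C]
  have hb1 := aux_key hfin σL hone hmul hinj P hPne
  have hb2 := aux_key hfin σL hone hmul hinj R' hR'ne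
  have h0 : Polynomial.aeval σL (P * R') = 0 := by
    rw [hId', map_sub, map_pow, Polynomial.aeval_X, Polynomial.aeval_one, hσn, sub_self]
  have hcomp : Module.finrank Fq (LinearMap.ker (Polynomial.aeval σL (P * R'))) = n := by
    rw [h0, LinearMap.ker_zero, finrank_top, hfin]
  have hsub : Module.finrank Fq (LinearMap.ker (Polynomial.aeval σL (P * R')))
      ≤ Module.finrank Fq (LinearMap.ker (Polynomial.aeval σL P))
        + Module.finrank Fq (LinearMap.ker (Polynomial.aeval σL R')) := by
    rw [map_mul, Module.End.mul_eq_comp]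
    exact aux_finrank_ker_comp _ _
  have hker : Module.finrank Fq (LinearMap.ker (Polynomial.aeval σL P))
      = t * ∑ j ∈ Finset.range k, qp ^ j := by
    have h1 := hPm.2
    omega
  -- identify the root set with the kernel
  have happ : ∀ x : K, (Polynomial.aeval σL P) x
      = x + ∑ i ∈ Finset.range k, x ^ (Q ^ (t * ∑ j ∈ Finset.range (i + 1), qp ^ j)) := by
    intro x
    rw [hPdef, map_add, map_sum, Polynomial.aeval_one]
    rw [LinearMap.add_apply, Module.End.one_apply]
    congr 1
    rw [LinearMap.coe_sum, Finset.sum_apply]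
    apply Finset.sum_congr rfl
    intro i _
    rw [map_pow, Polynomial.aeval_X, hσpow]
  have hseteq : {x : K | x + ∑ i ∈ Finset.range k,
      x ^ (Q ^ (t * ∑ j ∈ Finset.range (i + 1), qp ^ j)) = 0}
      = ↑(LinearMap.ker (Polynomial.aeval σL P)) := by
    ext x
    simp only [Set.mem_setOf_eq, SetLike.mem_coe, LinearMap.mem_ker, happ x]
  show Module.finrank Fq ↥(Submodule.span Fq {x : K | x + ∑ i ∈ Finset.range k,
      x ^ (Q ^ (t * ∑ j ∈ Finset.range (i + 1), qp ^ j)) = 0})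
      = t * ∑ j ∈ Finset.range k, qp ^ j
  rw [hseteq, Submodule.span_eq]
  exact hker
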